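/- (Gap between policy gradient and the Actor_o update.) Fix q ∈ ℝ^{S×A} and define the actor objective J_π(θ) := (1−γ) μ0ᵀ Π_θ q and the occupancy-weighted residual G(θ) := d_θᵀ (r − Ψ_θ q). Then J_π and G are differentiable and ∇_θ J(θ) = ∇_θ J_π(θ) + ∇_θ G(θ); i.e., the gap between the true policy gradient and the Actor_o gradient ∂_θ J_π equals the gradient of θ ↦ E_{(s,a)∼d_θ}[δ_θ(s,a)], where δ_θ := r − Ψ_θ q is the Bellman residual of the fixed critic q. -/

import Mathlib

open Matrix

private lemma prod_diff_aux {ι E : Type*} [NormedAddCommGroup E] [NormedSpace ℝ E]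
    (u : Finset ι) (g : ι → E → ℝ) (h : ∀ i ∈ u, Differentiable ℝ (g i)) :
    Differentiable ℝ fun θ => ∏ i ∈ u, g i θ := by
  classical
  induction u using Finset.induction with
  | empty => simpa using differentiable_const (1 : ℝ)
  | insert _ _ hx ih =>
    simp only [Finset.prod_insert hx]
    exact (h _ (Finset.mem_insert_self _ _)).mul
      (ih fun i hi => h i (Finset.mem_insert_of_mem hi))

private lemma det_diff_aux {ι : Type*} [Fintype ι] [DecidableEq ι] {n : ℕ}
    {f : (Fin n → ℝ) → Matrix ι ι ℝ}
    (h : ∀ i j, Differentiable ℝ fun θ => f θ i j) :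
    Differentiable ℝ fun θ => (f θ).det := by
  simp only [Matrix.det_apply']
  exact Differentiable.fun_sum fun σ _ => Differentiable.const_mul
    (prod_diff_aux Finset.univ (fun i θ => f θ (σ i) i) fun i _ => h (σ i) i) _

private lemma inv_entry_diff {ι : Type*} [Fintype ι] [DecidableEq ι] {n : ℕ}
    {f : (Fin n → ℝ) → Matrix ι ι ℝ}
    (h : ∀ i j, Differentiable ℝ fun θ => f θ i j)
    (hdet : ∀ θ, (f θ).det ≠ 0) (i j : ι) :
    Differentiable ℝ fun θ => (f θ)⁻¹ i j := by
  have heq : (fun θ => (f θ)⁻¹ i j)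
      = fun θ => ((f θ).det)⁻¹ * ((f θ).updateRow j (Pi.single i 1)).det := by
    funext θ
    rw [Matrix.inv_def, Matrix.smul_apply, Matrix.adjugate_apply, Ring.inverse_eq_inv',
      smul_eq_mul]
  rw [heq]
  refine ((det_diff_aux h).inv hdet).mul (det_diff_aux fun k l => ?_)
  by_cases hk : k = j
  · simpa [hk] using differentiable_const _
  · simpa [Matrix.updateRow_apply, hk] using h k l

noncomputable section

noncomputable section

variable {S A : Type*} [Fintype S] [Fintype A] [DecidableEq S] [DecidableEq A]
  [Nonempty S] [Nonempty A]

/-- A policy: nonnegative entries, and for each state the action probabilities sum to one. -/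
def IsPolicy (x : S × A → ℝ) : Prop :=
  (∀ p, 0 ≤ x p) ∧ ∀ s : S, ∑ a : A, x (s, a) = 1

/-- A row-stochastic transition matrix. -/
def IsStochasticMat (P : Matrix (S × A) S ℝ) : Prop :=
  (∀ p s, 0 ≤ P p s) ∧ ∀ p, ∑ s : S, P p s = 1

/-- A probability vector on states. -/
def IsProbVec (μ : S → ℝ) : Prop :=
  (∀ s, 0 ≤ μ s) ∧ ∑ s : S, μ s = 1

/-- The block policy matrix `Π(x) ∈ ℝ^{S × (S×A)}`. -/
def piMat (x : S × A → ℝ) : Matrix S (S × A) ℝ :=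
  Matrix.of fun s p => if p.1 = s then x p else 0

/-- The action-marginalization matrix `Ξ ∈ ℝ^{S × (S×A)}`. -/
def xiMat : Matrix S (S × A) ℝ :=
  Matrix.of fun s p => if p.1 = s then (1 : ℝ) else 0

/-- `Ψ(x) = I - γ P Π(x)`. -/
def psiMat (P : Matrix (S × A) S ℝ) (γ : ℝ) (x : S × A → ℝ) :
    Matrix (S × A) (S × A) ℝ :=
  1 - γ • (P * piMat x)

/-- The discounted state-action occupancy `d(x) = (1-γ)(Ψ(x)ᵀ)⁻¹ Π(x)ᵀ μ0`. -/
def dOcc (P : Matrix (S × A) S ℝ) (γ : ℝ) (μ0 : S → ℝ) (x : S × A → ℝ) :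
    S × A → ℝ :=
  (1 - γ) • (((psiMat P γ x)ᵀ)⁻¹ *ᵥ ((piMat x)ᵀ *ᵥ μ0))

/-- gap between policy gradient and the Actor_o update: for a fixed critic `q`,
the actor objective `J_π(θ) = (1-γ)μ0ᵀΠ_θ q` and residual term `G(θ) = d_θᵀ(r - Ψ_θ q)` are
differentiable, and `∇_θ J = ∇_θ J_π + ∇_θ G`. -/
theorem pg_actor_o_gap
    (P : Matrix (S × A) S ℝ) (hP : IsStochasticMat P)
    (γ : ℝ) (hγ0 : 0 ≤ γ) (hγ1 : γ < 1)
    (r : S × A → ℝ) (μ0 : S → ℝ) (hμ0 : IsProbVec μ0)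
    {n : ℕ} (π : (Fin n → ℝ) → S × A → ℝ)
    (hpol : ∀ θ, IsPolicy (π θ)) (hdiff : Differentiable ℝ π)
    (q : S × A → ℝ) :
    Differentiable ℝ (fun θ => (1 - γ) * (μ0 ⬝ᵥ (piMat (π θ) *ᵥ q))) ∧
    Differentiable ℝ (fun θ => dOcc P γ μ0 (π θ) ⬝ᵥ (r - psiMat P γ (π θ) *ᵥ q)) ∧
    ∀ θ : Fin n → ℝ,
      fderiv ℝ (fun t => dOcc P γ μ0 (π t) ⬝ᵥ r) θ
        = fderiv ℝ (fun t => (1 - γ) * (μ0 ⬝ᵥ (piMat (π t) *ᵥ q))) θ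
          + fderiv ℝ (fun t => dOcc P γ μ0 (π t) ⬝ᵥ (r - psiMat P γ (π t) *ᵥ q)) θ := by
  classical
  -- coordinate differentiability of the policy map
  have hπe : ∀ p : S × A, Differentiable ℝ fun θ => π θ p := by
    intro p; exact differentiable_pi.mp hdiff p
  -- entries of P * piMat
  have hmulpi : ∀ (x : S × A → ℝ) (p p' : S × A), (P * piMat x) p p' = P p p'.1 * x p' := by
    intro x p p'
    simp only [Matrix.mul_apply, piMat, Matrix.of_apply, mul_ite, mul_zero]
    rw [Finset.sum_ite_eq (Finset.univ) p'.1 (fun s => P p s * x p')]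
    simp
  -- entries of psiMat
  have hpsie : ∀ (x : S × A → ℝ) (p p' : S × A),
      psiMat P γ x p p' = (if p = p' then 1 else 0) - γ * (P p p'.1 * x p') := by
    intro x p p'
    simp [psiMat, hmulpi, Matrix.one_apply]
  -- determinant of psiMat is nonzero
  have hdet : ∀ x : S × A → ℝ, IsPolicy x → (psiMat P γ x).det ≠ 0 := by
    intro x hx
    apply det_ne_zero_of_sum_row_lt_diag
    intro k
    have hterm : ∀ j : S × A, 0 ≤ P k j.1 * x j := fun j => mul_nonneg (hP.1 k j.1) (hx.1 j)
    have hsum1 : ∑ j : S × A, P k j.1 * x j = 1 := by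
      rw [Fintype.sum_prod_type]
      simp only [← Finset.mul_sum]
      simp [hx.2, hP.2 k]
    have ht0 : 0 ≤ P k k.1 * x k := hterm k
    have ht1 : P k k.1 * x k ≤ 1 := by
      rw [← hsum1]
      exact Finset.single_le_sum (fun j _ => hterm j) (Finset.mem_univ k)
    have hsub : ∑ j ∈ Finset.univ.erase k, P k j.1 * x j = 1 - P k k.1 * x k := by
      rw [Finset.sum_erase_eq_sub (Finset.mem_univ k), hsum1]
    have hoff : ∑ j ∈ Finset.univ.erase k, ‖psiMat P γ x k j‖
        = γ * (1 - P k k.1 * x k) := by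
      rw [← hsub, Finset.mul_sum]
      apply Finset.sum_congr rfl
      intro j hj
      have hjk : ¬ (k = j) := fun h => (Finset.mem_erase.mp hj).1 h.symm
      rw [hpsie x k j, if_neg hjk, zero_sub, norm_neg, Real.norm_eq_abs,
        abs_of_nonneg (mul_nonneg hγ0 (hterm j))]
    have hdiag : ‖psiMat P γ x k k‖ = 1 - γ * (P k k.1 * x k) := by
      rw [hpsie x k k, if_pos rfl, Real.norm_eq_abs, abs_of_nonneg]
      nlinarith
    rw [hoff, hdiag]
    nlinarith
  -- entries of (psiMat)ᵀ are differentiable in θ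
  have hΨe : ∀ p p' : S × A, Differentiable ℝ fun θ => (psiMat P γ (π θ))ᵀ p p' := by
    intro p p'
    simp only [Matrix.transpose_apply, hpsie]
    exact (differentiable_const _).sub (((hπe p).const_mul _).const_mul γ)
  have hdetT : ∀ θ, ((psiMat P γ (π θ))ᵀ).det ≠ 0 := by
    intro θ; rw [Matrix.det_transpose]; exact hdet (π θ) (hpol θ)
  -- entries of the inverse are differentiable
  have hinv : ∀ p p' : S × A,
      Differentiable ℝ fun θ => ((psiMat P γ (π θ))ᵀ)⁻¹ p p' :=
    fun p p' => inv_entry_diff hΨe hdetT p p'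
  -- the occupancy vector entries
  have hwv : ∀ (x : S × A → ℝ) (p : S × A),
      ∑ s : S, (piMat x)ᵀ p s * μ0 s = x p * μ0 p.1 := by
    intro x p
    simp only [Matrix.transpose_apply, piMat, Matrix.of_apply, ite_mul, zero_mul]
    rw [Finset.sum_ite_eq (Finset.univ) p.1 (fun s => x p * μ0 s)]
    simp
  have hd : ∀ p : S × A, Differentiable ℝ fun θ => dOcc P γ μ0 (π θ) p := by
    intro p
    have heq : (fun θ => dOcc P γ μ0 (π θ) p)
        = fun θ => (1 - γ) * ∑ p' : S × A,
            ((psiMat P γ (π θ))ᵀ)⁻¹ p p' * (π θ p' * μ0 p'.1) := by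
      funext θ
      simp only [dOcc, Pi.smul_apply, smul_eq_mul, Matrix.mulVec, dotProduct]
      congr 1
      exact Finset.sum_congr rfl fun p' _ => by rw [hwv]
    rw [heq]
    exact Differentiable.const_mul (Differentiable.fun_sum fun p' _ =>
      (hinv p p').mul ((hπe p').mul_const _)) _
  -- differentiability of J
  have hJ : Differentiable ℝ fun θ => dOcc P γ μ0 (π θ) ⬝ᵥ r := by
    simp only [dotProduct]
    exact Differentiable.fun_sum fun p _ => (hd p).mul_const _
  -- differentiability of J_π
  have hJπ : Differentiable ℝ fun θ => (1 - γ) * (μ0 ⬝ᵥ (piMat (π θ) *ᵥ q)) := by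
    have heq : (fun θ => (1 - γ) * (μ0 ⬝ᵥ (piMat (π θ) *ᵥ q)))
        = fun θ => (1 - γ) * ∑ s : S, μ0 s * ∑ p : S × A,
            (if p.1 = s then π θ p else 0) * q p := by
      funext θ
      simp only [dotProduct, Matrix.mulVec, piMat, Matrix.of_apply]
    rw [heq]
    refine Differentiable.const_mul (Differentiable.fun_sum fun s _ =>
      Differentiable.const_mul (Differentiable.fun_sum fun p _ => ?_) _) _
    by_cases hps : p.1 = s
    · simp only [hps, if_pos rfl]; exact (hπe p).mul_const _
    · simp only [if_neg hps, zero_mul]; exact differentiable_const 0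
  -- the key pointwise identity
  have hkey : ∀ θ, dOcc P γ μ0 (π θ) ⬝ᵥ (r - psiMat P γ (π θ) *ᵥ q)
      = dOcc P γ μ0 (π θ) ⬝ᵥ r - (1 - γ) * (μ0 ⬝ᵥ (piMat (π θ) *ᵥ q)) := by
    intro θ
    set x := π θ with hxdef
    have hu : IsUnit ((psiMat P γ x)ᵀ).det := by
      rw [Matrix.det_transpose]
      exact isUnit_iff_ne_zero.mpr (hdet x (hpol θ))
    have hmain : dOcc P γ μ0 x ⬝ᵥ (psiMat P γ x *ᵥ q)
        = (1 - γ) * (μ0 ⬝ᵥ (piMat x *ᵥ q)) := by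
      rw [Matrix.dotProduct_mulVec, ← Matrix.mulVec_transpose]
      have : (psiMat P γ x)ᵀ *ᵥ dOcc P γ μ0 x
          = (1 - γ) • ((piMat x)ᵀ *ᵥ μ0) := by
        rw [dOcc, Matrix.mulVec_smul, Matrix.mulVec_mulVec,
          Matrix.mul_nonsing_inv _ hu, Matrix.one_mulVec]
      rw [this, smul_dotProduct, smul_eq_mul]
      congr 1
      rw [Matrix.mulVec_transpose, ← Matrix.dotProduct_mulVec]
    rw [dotProduct_sub, hmain]
  have hG : Differentiable ℝ fun θ => dOcc P γ μ0 (π θ) ⬝ᵥ (r - psiMat P γ (π θ) *ᵥ q) := by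
    have heq : (fun θ => dOcc P γ μ0 (π θ) ⬝ᵥ (r - psiMat P γ (π θ) *ᵥ q))
        = fun θ => dOcc P γ μ0 (π θ) ⬝ᵥ r - (1 - γ) * (μ0 ⬝ᵥ (piMat (π θ) *ᵥ q)) := by
      funext θ; exact hkey θ
    rw [heq]; exact hJ.sub hJπ
  refine ⟨hJπ, hG, fun θ => ?_⟩
  have hfun : (fun t => dOcc P γ μ0 (π t) ⬝ᵥ r)
      = fun t => (1 - γ) * (μ0 ⬝ᵥ (piMat (π t) *ᵥ q))
        + dOcc P γ μ0 (π t) ⬝ᵥ (r - psiMat P γ (π t) *ᵥ q) := by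
    funext t; rw [hkey t]; ring
  rw [hfun]
  exact fderiv_add (hJπ θ) (hG θ)
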